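/- For a Manin matrix $M$ of size $N\times N$ over an associative ring (i.e., a matrix satisfying $[M_{ij}, M_{kl}] = [M_{kj}, M_{il}]$ for all $i,j,k,l$), the column determinant equals the trace of the antisymmetrized product: $\cdet M = \mathrm{tr}\, A^{(N)} M_1 \cdots M_N$, where $M_a$ denotes $M$ acting in the $a$-th copy of $\End\CC^N$ in $(\End\CC^N)^{\otimes N}$ and $A^{(N)}$ is the normalized antisymmetrizer. -/

import Mathlib

open Equiv BigOperators


/-- Column determinant over a noncommutative ring. -/
noncomputable def cdet {R : Type*} [Ring R] (N : ℕ) (M : Fin N → Fin N → R) : R :=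
  ∑ σ : Equiv.Perm (Fin N),
    (Equiv.Perm.sign σ : ℤ) • ((List.finRange N).map (fun j => M (σ j) j)).prod

/-- The element of `(End ℂ^N)^{⊗ N} ⊗ R` acting as `M` in tensor slot `a`. -/
noncomputable def slotMat {R : Type*} [Ring R] (N m : ℕ) (a : Fin m)
    (c : Fin N → Fin N → R) : Matrix (Fin m → Fin N) (Fin m → Fin N) R :=
  fun f g => if ∀ k, k ≠ a → f k = g k then c (f a) (g a) else 0

/-- The permutation operator `P_σ` with entries in `R`. -/
noncomputable def permMatR (R : Type*) [Ring R] (N m : ℕ) (σ : Equiv.Perm (Fin m)) :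
    Matrix (Fin m → Fin N) (Fin m → Fin N) R :=
  fun f g => if f = g ∘ σ then 1 else 0

/-- The normalized antisymmetrizer with entries in `R`. -/
noncomputable def antisymR (R : Type*) [Ring R] [Algebra ℚ R] (N m : ℕ) :
    Matrix (Fin m → Fin N) (Fin m → Fin N) R :=
  ((m.factorial : ℚ))⁻¹ •
    ∑ σ : Equiv.Perm (Fin m), (Equiv.Perm.sign σ : ℤ) • permMatR R N m σ


section AuxSect
variable {R : Type*} [Ring R] [Algebra ℚ R] {N : ℕ}




noncomputable def Ccol (M : Fin N → Fin N → R) (w : List (Fin N)) : R :=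
  ∑ σ : Equiv.Perm (Fin N), (Equiv.Perm.sign σ : ℤ) • (w.map (fun j => M (σ j) j)).prod

lemma half_cancel {x : R} (h : x + x = 0) : x = 0 := by
  have h2 : ((2:ℚ)⁻¹) • (x + x) = x := by
    rw [smul_add, ← add_smul]; norm_num
  rw [← h2, h, smul_zero]

lemma Ccol_swap_adj (M : Fin N → Fin N → R)
    (hManin : ∀ i j k l, M i j * M k l - M k l * M i j = M k j * M i l - M i l * M k j)
    (l1 l2 : List (Fin N)) (i j : Fin N)
    (hi1 : i ∉ l1) (hi2 : i ∉ l2) (hj1 : j ∉ l1) (hj2 : j ∉ l2) :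
    Ccol M (l1 ++ i :: j :: l2) = Ccol M (l1 ++ j :: i :: l2) := by
  rcases eq_or_ne i j with rfl | hij
  · rfl
  set s := Equiv.swap i j with hs
  set A : Perm (Fin N) → R := fun σ => (l1.map (fun k => M (σ k) k)).prod with hA
  set B : Perm (Fin N) → R := fun σ => (l2.map (fun k => M (σ k) k)).prod with hB
  -- expansion of the two sides
  have expand : ∀ (a b : Fin N) (σ : Perm (Fin N)),
      ((l1 ++ a :: b :: l2).map (fun k => M (σ k) k)).prod
        = A σ * (M (σ a) a * (M (σ b) b * B σ)) := by
    intro a b σ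
    simp [List.prod_append, hA, hB, mul_assoc]
  -- invariance of A, B under right-multiplication by s
  have hAs : ∀ σ : Perm (Fin N), A (σ * s) = A σ := by
    intro σ
    simp only [hA]
    congr 1
    refine List.map_congr_left (fun k hk => ?_)
    have hk1 : k ≠ i := fun h => hi1 (h ▸ hk)
    have hk2 : k ≠ j := fun h => hj1 (h ▸ hk)
    simp [Perm.mul_apply, hs, Equiv.swap_apply_of_ne_of_ne hk1 hk2]
  have hBs : ∀ σ : Perm (Fin N), B (σ * s) = B σ := by
    intro σ
    simp only [hB]
    congr 1
    refine List.map_congr_left (fun k hk => ?_)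
    have hk1 : k ≠ i := fun h => hi2 (h ▸ hk)
    have hk2 : k ≠ j := fun h => hj2 (h ▸ hk)
    simp [Perm.mul_apply, hs, Equiv.swap_apply_of_ne_of_ne hk1 hk2]
  have hsgn : ∀ σ : Perm (Fin N), ((Perm.sign (σ * s) : ℤ)) = -(Perm.sign σ : ℤ) := by
    intro σ
    rw [hs]
    simp [Equiv.Perm.sign_swap hij]
  have hsi : ∀ σ : Perm (Fin N), (σ * s) i = σ j := by intro σ; simp [hs, Perm.mul_apply]
  have hsj : ∀ σ : Perm (Fin N), (σ * s) j = σ i := by intro σ; simp [hs, Perm.mul_apply]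
  -- the two sides as sums
  have e1 : Ccol M (l1 ++ i :: j :: l2)
      = ∑ σ : Perm (Fin N), (Perm.sign σ : ℤ) • (A σ * (M (σ i) i * (M (σ j) j * B σ))) := by
    unfold Ccol; exact Finset.sum_congr rfl fun σ _ => by rw [expand]
  have e2 : Ccol M (l1 ++ j :: i :: l2)
      = ∑ σ : Perm (Fin N), (Perm.sign σ : ℤ) • (A σ * (M (σ j) j * (M (σ i) i * B σ))) := by
    unfold Ccol; exact Finset.sum_congr rfl fun σ _ => by rw [expand]
  -- reindexed versions
  have r1 : Ccol M (l1 ++ i :: j :: l2)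
      = ∑ σ : Perm (Fin N), -((Perm.sign σ : ℤ) • (A σ * (M (σ j) i * (M (σ i) j * B σ)))) := by
    rw [e1, ← Equiv.sum_comp (Equiv.mulRight s)
      (fun σ => (Perm.sign σ : ℤ) • (A σ * (M (σ i) i * (M (σ j) j * B σ))))]
    refine Finset.sum_congr rfl fun σ _ => ?_
    simp only [Equiv.coe_mulRight, hsgn, hAs, hBs, hsi, hsj, neg_smul]
  have r2 : Ccol M (l1 ++ j :: i :: l2)
      = ∑ σ : Perm (Fin N), -((Perm.sign σ : ℤ) • (A σ * (M (σ i) j * (M (σ j) i * B σ)))) := by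
    rw [e2, ← Equiv.sum_comp (Equiv.mulRight s)
      (fun σ => (Perm.sign σ : ℤ) • (A σ * (M (σ j) j * (M (σ i) i * B σ))))]
    refine Finset.sum_congr rfl fun σ _ => ?_
    simp only [Equiv.coe_mulRight, hsgn, hAs, hBs, hsi, hsj, neg_smul]
  -- combine
  have d1 : Ccol M (l1 ++ i :: j :: l2) - Ccol M (l1 ++ j :: i :: l2)
      = ∑ σ : Perm (Fin N), (Perm.sign σ : ℤ) •
          (A σ * ((M (σ i) i * M (σ j) j - M (σ j) j * M (σ i) i) * B σ)) := by
    rw [e1, e2, ← Finset.sum_sub_distrib]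
    refine Finset.sum_congr rfl fun σ _ => ?_
    rw [← smul_sub, ← mul_sub, sub_mul, mul_assoc, mul_assoc]
  have d2 : Ccol M (l1 ++ i :: j :: l2) - Ccol M (l1 ++ j :: i :: l2)
      = -∑ σ : Perm (Fin N), (Perm.sign σ : ℤ) •
          (A σ * ((M (σ j) i * M (σ i) j - M (σ i) j * M (σ j) i) * B σ)) := by
    rw [r1, r2, Finset.sum_neg_distrib, Finset.sum_neg_distrib, ← neg_sub', neg_inj,
      ← Finset.sum_sub_distrib]
    refine Finset.sum_congr rfl fun σ _ => ?_
    rw [← smul_sub, ← mul_sub, sub_mul, mul_assoc, mul_assoc]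
  have hSS : (∑ σ : Perm (Fin N), (Perm.sign σ : ℤ) •
          (A σ * ((M (σ i) i * M (σ j) j - M (σ j) j * M (σ i) i) * B σ)))
      = ∑ σ : Perm (Fin N), (Perm.sign σ : ℤ) •
          (A σ * ((M (σ j) i * M (σ i) j - M (σ i) j * M (σ j) i) * B σ)) :=
    Finset.sum_congr rfl fun σ _ => by rw [hManin (σ i) i (σ j) j]
  have hS0 : (∑ σ : Perm (Fin N), (Perm.sign σ : ℤ) •
          (A σ * ((M (σ j) i * M (σ i) j - M (σ i) j * M (σ j) i) * B σ))) = 0 := by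
    apply half_cancel
    nth_rewrite 1 [← hSS]
    rw [← d1, d2, neg_add_cancel]
  rw [← sub_eq_zero, d1, hSS, hS0]

lemma Ccol_perm (M : Fin N → Fin N → R)
    (hManin : ∀ i j k l, M i j * M k l - M k l * M i j = M k j * M i l - M i l * M k j) :
    ∀ {l l' : List (Fin N)}, l.Perm l' → ∀ l0 : List (Fin N), (l0 ++ l).Nodup →
      Ccol M (l0 ++ l) = Ccol M (l0 ++ l') := by
  intro l l' h
  induction h with
  | nil => intro l0 _; rfl
  | cons x h ih =>
      intro l0 hnd
      have := ih (l0 ++ [x]) (by simpa using hnd)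
      simpa using this
  | swap x y t =>
      intro l0 hnd
      have hy0 : y ∉ l0 := by
        intro hy; exact (List.disjoint_of_nodup_append hnd) hy (by simp)
      have hx0 : x ∉ l0 := by
        intro hx; exact (List.disjoint_of_nodup_append hnd) hx (by simp)
      have hnd2 : (y :: x :: t).Nodup := (List.nodup_append.mp hnd).2.1
      have hyt : y ∉ t := by
        have := hnd2.notMem
        simp at this; tauto
      have hxt : x ∉ t := by
        have := hnd2.of_cons.notMem
        simpa using this
      exact Ccol_swap_adj M hManin l0 t y x hy0 hyt hx0 hxt
  | trans h1 h2 ih1 ih2 =>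
      intro l0 hnd
      rw [ih1 l0 hnd, ih2 l0 ?_]
      exact ((h1.append_left l0).nodup_iff).mp hnd

lemma Ccol_eq (M : Fin N → Fin N → R)
    (hManin : ∀ i j k l, M i j * M k l - M k l * M i j = M k j * M i l - M i l * M k j)
    (v : Equiv.Perm (Fin N)) :
    Ccol M ((List.finRange N).map v) = Ccol M (List.finRange N) := by
  have hnd : ((List.finRange N).map v).Nodup :=
    (List.nodup_finRange N).map v.injective
  have hperm : ((List.finRange N).map v).Perm (List.finRange N) :=
    (List.perm_ext_iff_of_nodup hnd (List.nodup_finRange N)).mpr (by intro a; simpa using ⟨v.symm a, by simp⟩)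
  simpa using Ccol_perm M hManin hperm [] (by simpa using hnd)

omit [Algebra ℚ R] in
lemma slot_prod_list (M : Fin N → Fin N → R) (l : List (Fin N)) (hl : l.Nodup)
    (f g : Fin N → Fin N) :
    ((l.map (fun a => slotMat N N a M)).prod) f g
      = if ∀ k, k ∉ l → f k = g k then (l.map (fun a => M (f a) (g a))).prod else 0 := by
  classical
  induction l generalizing f with
  | nil =>
      simp only [List.map_nil, List.prod_nil, Matrix.one_apply, List.not_mem_nil]
      by_cases h : f = g
      · rw [if_pos h, if_pos (fun k _ => congrFun h k)]
      · rw [if_neg h, if_neg (fun hc => h (funext fun k => hc k (fun hh => hh)))]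
  | cons a t ih =>
      have hat : a ∉ t := (List.nodup_cons.mp hl).1
      have hnt : t.Nodup := (List.nodup_cons.mp hl).2
      simp only [List.map_cons, List.prod_cons, Matrix.mul_apply]
      rw [Finset.sum_eq_single (Function.update f a (g a))]
      · rw [show slotMat N N a M f (Function.update f a (g a)) = M (f a) (g a) by
          unfold slotMat
          rw [if_pos (fun k hk => (Function.update_of_ne hk _ _).symm),
            Function.update_self]]
        rw [ih hnt]
        by_cases hc : ∀ k, k ∉ a :: t → f k = g k
        · rw [if_pos, if_pos hc]
          · have hmap : List.map (fun b => M (Function.update f a (g a) b) (g b)) t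
                = List.map (fun b => M (f b) (g b)) t := by
              refine List.map_congr_left (fun b hb => ?_)
              have hba : b ≠ a := fun h => hat (h ▸ hb)
              rw [Function.update_of_ne hba]
            rw [hmap]
          · intro k hk
            by_cases hka : k = a
            · subst hka; rw [Function.update_self]
            · rw [Function.update_of_ne hka]
              exact hc k (by simp [hka, hk])
        · rw [if_neg, if_neg hc, mul_zero]
          intro hc2
          apply hc
          intro k hk
          simp only [List.mem_cons, not_or] at hk
          have := hc2 k hk.2
          rwa [Function.update_of_ne hk.1] at this
      · intro h _ hne
        by_cases hs : ∀ k, k ≠ a → f k = h k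
        · have hha : h a ≠ g a := by
            intro heq
            apply hne
            funext k
            by_cases hka : k = a
            · subst hka; rw [Function.update_self, heq]
            · rw [Function.update_of_ne hka, hs k hka]
          rw [ih hnt, if_neg, mul_zero]
          intro hc
          exact hha (hc a hat)
        · rw [show slotMat N N a M f h = 0 by unfold slotMat; rw [if_neg hs], zero_mul]
      · intro h; exact absurd (Finset.mem_univ _) h

omit [Algebra ℚ R] in
lemma slot_prod_apply (M : Fin N → Fin N → R) (f g : Fin N → Fin N) :
    (((List.finRange N).map (fun a => slotMat N N a M)).prod) f g
      = ((List.finRange N).map (fun a => M (f a) (g a))).prod := by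
  rw [slot_prod_list M _ (List.nodup_finRange N) f g,
    if_pos (fun k hk => absurd (List.mem_finRange k) hk)]

end AuxSect

/-- for a Manin matrix `M`, the column determinant equals the trace of the
antisymmetrized product: `cdet M = tr A^{(N)} M_1 ⋯ M_N`. -/
theorem cdet_eq_trace_antisym {R : Type*} [Ring R] [Algebra ℚ R] (N : ℕ)
    (M : Fin N → Fin N → R)
    (hManin : ∀ i j k l, M i j * M k l - M k l * M i j = M k j * M i l - M i l * M k j) :
    Matrix.trace (antisymR R N N *
        ((List.finRange N).map (fun a => slotMat N N a M)).prod)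
      = cdet N M := by
  classical
  have hsq : ∀ u : ℤˣ, (u:ℤ) * u = 1 := by
    intro u; rcases Int.units_eq_one_or u with h|h <;> simp [h]
  set P := ((List.finRange N).map (fun a => slotMat N N a M)).prod with hPdef
  have hPapp : ∀ f g : Fin N → Fin N,
      P f g = ((List.finRange N).map (fun a => M (f a) (g a))).prod := slot_prod_apply M
  -- trace of permMat σ * P
  have htr : ∀ σ : Perm (Fin N), Matrix.trace (permMatR R N N σ * P)
      = ∑ g : Fin N → Fin N,
          ((List.finRange N).map (fun a => M (g a) (g (σ a)))).prod := by
    intro σ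
    unfold Matrix.trace
    simp only [Matrix.diag_apply, Matrix.mul_apply]
    unfold permMatR
    rw [Finset.sum_comm]
    refine Finset.sum_congr rfl fun g _ => ?_
    rw [Finset.sum_eq_single (g ∘ σ)]
    · rw [if_pos rfl, one_mul, hPapp]
      rfl
    · intro f _ hne
      rw [if_neg hne, zero_mul]
    · intro h; exact absurd (Finset.mem_univ _) h
  -- reduce the trace to a big sum
  have step1 : Matrix.trace (antisymR R N N * P)
      = ((N.factorial : ℚ))⁻¹ • ∑ σ : Perm (Fin N), (Perm.sign σ : ℤ) •
          ∑ g : Fin N → Fin N,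
            ((List.finRange N).map (fun a => M (g a) (g (σ a)))).prod := by
    unfold antisymR
    rw [Matrix.smul_mul, Matrix.trace_smul, Finset.sum_mul, Matrix.trace_sum]
    congr 1
    refine Finset.sum_congr rfl fun σ _ => ?_
    rw [Matrix.smul_mul, Matrix.trace_smul, htr σ]
  set G : (Fin N → Fin N) → R := fun g => ∑ σ : Perm (Fin N), (Perm.sign σ : ℤ) •
      ((List.finRange N).map (fun a => M (g a) (g (σ a)))).prod with hGdef
  -- noninjective terms vanish
  have hG0 : ∀ g : Fin N → Fin N, ¬ Function.Injective g → G g = 0 := by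
    intro g hg
    rw [Function.Injective] at hg
    push_neg at hg
    obtain ⟨i, j, hgij, hij⟩ := hg
    apply half_cancel
    simp only [hGdef]
    nth_rewrite 1 [← Equiv.sum_comp (Equiv.mulLeft (Equiv.swap i j))
      (fun σ => (Perm.sign σ : ℤ) •
        ((List.finRange N).map (fun a => M (g a) (g (σ a)))).prod)]
    simp only [Equiv.coe_mulLeft]
    rw [← Finset.sum_add_distrib]
    refine Finset.sum_eq_zero fun σ _ => ?_
    have h1 : ∀ a : Fin N, g ((Equiv.swap i j * σ) a) = g (σ a) := by
      intro a
      rw [Perm.mul_apply]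
      rcases eq_or_ne (σ a) i with h|h
      · rw [h, Equiv.swap_apply_left, ← hgij]
      rcases eq_or_ne (σ a) j with h2|h2
      · rw [h2, Equiv.swap_apply_right, hgij]
      · rw [Equiv.swap_apply_of_ne_of_ne h h2]
    have h2 : ((Perm.sign (Equiv.swap i j * σ)) : ℤ) = -(Perm.sign σ : ℤ) := by
      simp [Equiv.Perm.sign_swap hij]
    simp only [h1, h2, neg_smul, neg_add_cancel]
  -- restrict the sum to permutations
  have hsub : ∑ g : Fin N → Fin N, G g = ∑ τ : Perm (Fin N), G ⇑τ := by
    rw [← Finset.sum_subset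
      (Finset.subset_univ (Finset.univ.image (fun τ : Perm (Fin N) => ⇑τ))) ?h0]
    · rw [Finset.sum_image fun τ _ τ' _ h => Equiv.coe_fn_injective h]
    case h0 =>
      intro g _ hgim
      refine hG0 g fun hinj => hgim ?_
      have hb : Function.Bijective g := Finite.injective_iff_bijective.mp hinj
      exact Finset.mem_image.mpr ⟨Equiv.ofBijective g hb, Finset.mem_univ _, rfl⟩
  -- evaluate G on permutations
  have hGt : ∀ τ : Perm (Fin N), G ⇑τ
      = ∑ v : Perm (Fin N), ((Perm.sign τ : ℤ) * (Perm.sign v : ℤ)) •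
          ((List.finRange N).map (fun a => M (τ a) (v a))).prod := by
    intro τ
    simp only [hGdef]
    rw [← Equiv.sum_comp (Equiv.mulLeft τ⁻¹)
      (fun σ => (Perm.sign σ : ℤ) •
        ((List.finRange N).map (fun a => M (τ a) (τ (σ a)))).prod)]
    refine Finset.sum_congr rfl fun v _ => ?_
    simp only [Equiv.coe_mulLeft]
    have hv : ∀ a : Fin N, τ ((τ⁻¹ * v) a) = v a := fun a => by
      rw [Perm.mul_apply]; exact τ.apply_symm_apply (v a)
    have hsgn : ((Perm.sign (τ⁻¹ * v)) : ℤ) = (Perm.sign τ : ℤ) * (Perm.sign v : ℤ) := by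
      simp
    simp only [hv, hsgn]
  -- the sum over permutations equals N! times the column determinant
  have hmain : ∑ τ : Perm (Fin N), G ⇑τ = N.factorial • cdet N M := by
    calc ∑ τ : Perm (Fin N), G ⇑τ
        = ∑ τ : Perm (Fin N), ∑ v : Perm (Fin N),
            ((Perm.sign τ : ℤ) * (Perm.sign v : ℤ)) •
              ((List.finRange N).map (fun a => M (τ a) (v a))).prod :=
          Finset.sum_congr rfl fun τ _ => hGt τ
      _ = ∑ v : Perm (Fin N), ∑ τ : Perm (Fin N),
            ((Perm.sign τ : ℤ) * (Perm.sign v : ℤ)) •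
              ((List.finRange N).map (fun a => M (τ a) (v a))).prod := Finset.sum_comm
      _ = ∑ _v : Perm (Fin N), cdet N M := by
          refine Finset.sum_congr rfl fun v _ => ?_
          rw [← Equiv.sum_comp (Equiv.mulRight v)
            (fun τ => ((Perm.sign τ : ℤ) * (Perm.sign v : ℤ)) •
              ((List.finRange N).map (fun a => M (τ a) (v a))).prod)]
          have hs2 : ∀ π : Perm (Fin N),
              ((Perm.sign (π * v) : ℤ) * (Perm.sign v : ℤ)) = (Perm.sign π : ℤ) := by
            intro π
            rw [map_mul, Units.val_mul, mul_assoc, hsq, mul_one]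
          have hcc : Ccol M ((List.finRange N).map ⇑v)
              = ∑ π : Perm (Fin N), (Perm.sign π : ℤ) •
                  ((List.finRange N).map (fun a => M (π (v a)) (v a))).prod := by
            unfold Ccol
            refine Finset.sum_congr rfl fun π _ => ?_
            rw [List.map_map]
            rfl
          have happ : ∀ π : Perm (Fin N), ∀ a : Fin N, (π * v) a = π (v a) :=
            fun π a => rfl
          simp only [Equiv.coe_mulRight, hs2, happ]
          rw [← hcc, Ccol_eq M hManin v]
          rfl
      _ = N.factorial • cdet N M := by
          rw [Finset.sum_const, Finset.card_univ]
          congr 1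
          rw [Fintype.card_perm, Fintype.card_fin]
  -- put everything together
  rw [step1]
  have hswap2 : (∑ σ : Perm (Fin N), (Perm.sign σ : ℤ) •
        ∑ g : Fin N → Fin N,
          ((List.finRange N).map (fun a => M (g a) (g (σ a)))).prod)
      = ∑ g : Fin N → Fin N, G g := by
    simp only [hGdef, Finset.smul_sum]
    exact Finset.sum_comm
  rw [hswap2, hsub, hmain, ← Nat.cast_smul_eq_nsmul ℚ, smul_smul,
    inv_mul_cancel₀ (by exact_mod_cast N.factorial_ne_zero), one_smul]
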